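/- The function φ*(p) := π - 2 arcsin(q*(p)) is continuous and strictly decreasing on (1, ∞), with φ*(p) → π/2 as p ↓ 1 and φ*(p) → 0 as p → ∞; in particular 0 < φ*(p) < π/2 for all p ∈ (1, ∞). -/

import Mathlib

open Real Filter

/-- The complete `p`-elliptic integral of the first kind. -/
noncomputable def K1 (p q : ℝ) : ℝ :=
  ∫ z in (0:ℝ)..1, (1 - q ^ 2 * z ^ 2) ^ (-(1/2) : ℝ) * (1 - z ^ 2) ^ (-(1 / p))

/-- The complete `p`-elliptic integral of the second kind. -/
noncomputable def E1 (p q : ℝ) : ℝ :=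
  ∫ z in (0:ℝ)..1, (1 - q ^ 2 * z ^ 2) ^ ((1/2) : ℝ) * (1 - z ^ 2) ^ (-(1 / p))

open MeasureTheory intervalIntegral Set

noncomputable def wP (p z : ℝ) : ℝ := (1 - z ^ 2) ^ (-(1 / p))

noncomputable def hh (q z : ℝ) : ℝ :=
  2 * (1 - q ^ 2 * z ^ 2) ^ ((1/2) : ℝ) - (1 - q ^ 2 * z ^ 2) ^ (-(1/2) : ℝ)

noncomputable def GG (p q : ℝ) : ℝ := ∫ z in (0:ℝ)..1, hh q z * wP p z

lemma measurable_rpow_const (c : ℝ) : Measurable (fun x : ℝ => x ^ c) := by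
  rcases eq_or_ne c 0 with rfl | hc
  · simpa using measurable_const (a := (1:ℝ)) (α := ℝ)
  have heq : (fun x : ℝ => x ^ c) = fun x =>
      if x = 0 then 0 else Real.exp (Real.log x * c) * (if x < 0 then Real.cos (c * π) else 1) := by
    funext x
    rcases lt_trichotomy x 0 with h | h | h
    · rw [Real.rpow_def_of_neg h]
      simp [h.ne, h, mul_comm c π]
    · simp [h, Real.zero_rpow hc]
    · rw [Real.rpow_def_of_pos h]
      simp [h.ne', not_lt.2 h.le]
  rw [heq]
  apply Measurable.ite (measurableSet_eq_fun measurable_id measurable_const) measurable_const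
  exact ((Real.measurable_log.mul_const c).exp).mul
    (Measurable.ite measurableSet_Iio measurable_const measurable_const)

lemma wP_meas (p : ℝ) : Measurable (wP p) := by
  unfold wP
  exact (measurable_rpow_const _).comp (measurable_const.sub (measurable_id.pow_const 2))

lemma wP_nonneg {p z : ℝ} (hz : z ∈ Icc (0:ℝ) 1) : 0 ≤ wP p z := by
  apply Real.rpow_nonneg; nlinarith [hz.1, hz.2]

lemma wP_pos {p z : ℝ} (hz : z ∈ Ico (0:ℝ) 1) : 0 < wP p z := by
  apply Real.rpow_pos_of_pos; nlinarith [hz.1, hz.2]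

lemma wP_le {p z : ℝ} (hp : 0 < p) (hz : z ∈ Icc (0:ℝ) 1) :
    wP p z ≤ (1 - z) ^ (-(1/p)) := by
  have h1 : (1 : ℝ) - z ^ 2 = (1 - z) * (1 + z) := by ring
  have hz0 := hz.1; have hz1 := hz.2
  unfold wP
  rw [h1, Real.mul_rpow (by linarith) (by linarith)]
  have h2 : (1 + z) ^ (-(1/p)) ≤ 1 :=
    Real.rpow_le_one_of_one_le_of_nonpos (by linarith)
      (by rw [neg_nonpos]; positivity)
  calc (1 - z) ^ (-(1/p)) * (1 + z) ^ (-(1/p))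
      ≤ (1 - z) ^ (-(1/p)) * 1 := by
        apply mul_le_mul_of_nonneg_left h2 (Real.rpow_nonneg (by linarith) _)
    _ = (1 - z) ^ (-(1/p)) := mul_one _

lemma intable_one_sub_rpow {r : ℝ} (hr : -1 < r) :
    IntervalIntegrable (fun z => (1 - z) ^ r) volume 0 1 := by
  have h := ((intervalIntegrable_rpow' (a := 0) (b := 1) hr).comp_sub_left 1).symm
  simpa using h

lemma intable_wP {p : ℝ} (hp : 1 < p) : IntervalIntegrable (wP p) volume 0 1 := by
  have hr : (-1 : ℝ) < -(1/p) := by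
    have : 1/p < 1 := by rw [div_lt_one (by linarith)]; linarith
    linarith
  apply (intable_one_sub_rpow hr).mono_fun (wP_meas p).aestronglyMeasurable
  filter_upwards [ae_restrict_mem measurableSet_uIoc] with z hz
  rw [Set.uIoc_of_le (by norm_num : (0:ℝ) ≤ 1)] at hz
  have hz' : z ∈ Icc (0:ℝ) 1 := ⟨hz.1.le, hz.2⟩
  rw [Real.norm_eq_abs, Real.norm_eq_abs, abs_of_nonneg (wP_nonneg hz'),
    abs_of_nonneg (Real.rpow_nonneg (by linarith [hz'.2]) _)]
  exact wP_le (by linarith) hz'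

lemma intable_mul_wP {p : ℝ} (hp : 1 < p) {c : ℝ → ℝ} (hc : ContinuousOn c (Icc 0 1)) :
    IntervalIntegrable (fun z => c z * wP p z) volume 0 1 := by
  apply (intable_wP hp).continuousOn_mul
  rwa [Set.uIcc_of_le (by norm_num : (0:ℝ) ≤ 1)]

lemma base_pos {q z : ℝ} (hq : q ∈ Ico (0:ℝ) 1) (hz : z ∈ Icc (0:ℝ) 1) :
    0 < 1 - q ^ 2 * z ^ 2 := by
  have h1 : z ^ 2 ≤ 1 := by nlinarith [hz.1, hz.2]
  have h2 : q ^ 2 < 1 := by nlinarith [hq.1, hq.2]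
  nlinarith [sq_nonneg z, sq_nonneg q]

lemma cont_rpow_base {q e : ℝ} (hq : q ∈ Ico (0:ℝ) 1) :
    ContinuousOn (fun z : ℝ => (1 - q ^ 2 * z ^ 2) ^ e) (Icc 0 1) := by
  apply ContinuousOn.rpow_const
  · exact (continuous_const.sub (continuous_const.mul (continuous_pow 2))).continuousOn
  · intro z hz
    exact Or.inl (ne_of_gt (base_pos hq hz))

lemma hh_contOn {q : ℝ} (hq : q ∈ Ico (0:ℝ) 1) : ContinuousOn (hh q) (Icc 0 1) := by
  unfold hh
  exact (continuousOn_const.mul (cont_rpow_base hq)).sub (cont_rpow_base hq)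

lemma intable_integrand {p q : ℝ} (hp : 1 < p) (hq : q ∈ Ico (0:ℝ) 1) :
    IntervalIntegrable (fun z => hh q z * wP p z) volume 0 1 :=
  intable_mul_wP hp (hh_contOn hq)

lemma hh_eq {q z : ℝ} (hx : 0 < 1 - q ^ 2 * z ^ 2) :
    hh q z = (1 - 2 * q ^ 2 * z ^ 2) * (1 - q ^ 2 * z ^ 2) ^ (-(1/2) : ℝ) := by
  unfold hh
  set x := 1 - q ^ 2 * z ^ 2 with hxdef
  have hs : 0 < x ^ ((1/2) : ℝ) := Real.rpow_pos_of_pos hx _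
  have hss : x ^ ((1/2) : ℝ) * x ^ ((1/2) : ℝ) = x := by
    rw [← Real.rpow_add hx]; norm_num
  have hinv : x ^ (-(1/2) : ℝ) = (x ^ ((1/2) : ℝ))⁻¹ := Real.rpow_neg hx.le _
  have h1 : (1 : ℝ) - 2 * q ^ 2 * z ^ 2 = 2 * (x ^ ((1/2):ℝ) * x ^ ((1/2):ℝ)) - 1 := by
    rw [hss]; ring
  rw [hinv, h1]
  field_simp

lemma hh_pos {q z : ℝ} (hx : 0 < 1 - q ^ 2 * z ^ 2) (h2 : 2 * q ^ 2 * z ^ 2 < 1) :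
    0 < hh q z := by
  rw [hh_eq hx]
  exact mul_pos (by linarith) (Real.rpow_pos_of_pos hx _)

lemma hh_nonpos {q z : ℝ} (hx : 0 < 1 - q ^ 2 * z ^ 2) (h2 : 1 ≤ 2 * q ^ 2 * z ^ 2) :
    hh q z ≤ 0 := by
  rw [hh_eq hx]
  exact mul_nonpos_of_nonpos_of_nonneg (by linarith) (Real.rpow_nonneg hx.le _)

lemma hh_neg {q z : ℝ} (hx : 0 < 1 - q ^ 2 * z ^ 2) (h2 : 1 < 2 * q ^ 2 * z ^ 2) :
    hh q z < 0 := by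
  rw [hh_eq hx]
  exact mul_neg_of_neg_of_pos (by linarith) (Real.rpow_pos_of_pos hx _)

lemma hh_anti {q1 q2 z : ℝ} (h0 : 0 ≤ q1) (h12 : q1 < q2) (hq2 : q2 < 1)
    (hz : z ∈ Ioc (0:ℝ) 1) : hh q2 z < hh q1 z := by
  have hz2 : z ^ 2 ≤ 1 := by nlinarith [hz.1, hz.2]
  have hx2 : 0 < 1 - q2 ^ 2 * z ^ 2 := by nlinarith [hz.1]
  have hx12 : 1 - q2 ^ 2 * z ^ 2 < 1 - q1 ^ 2 * z ^ 2 := by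
    have hq12 : q1 ^ 2 < q2 ^ 2 := by nlinarith
    have hzpos : 0 < z ^ 2 := by nlinarith [hz.1, mul_pos hz.1 hz.1]
    nlinarith [mul_lt_mul_of_pos_right hq12 hzpos]
  have hs : (1 - q2 ^ 2 * z ^ 2) ^ ((1/2):ℝ) < (1 - q1 ^ 2 * z ^ 2) ^ ((1/2):ℝ) :=
    Real.rpow_lt_rpow hx2.le hx12 (by norm_num)
  have hs2 : 0 < (1 - q2 ^ 2 * z ^ 2) ^ ((1/2):ℝ) := Real.rpow_pos_of_pos hx2 _
  have hinv : ((1 - q1 ^ 2 * z ^ 2) ^ ((1/2):ℝ))⁻¹ < ((1 - q2 ^ 2 * z ^ 2) ^ ((1/2):ℝ))⁻¹ :=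
    inv_strictAnti₀ hs2 hs
  unfold hh
  rw [Real.rpow_neg hx2.le, Real.rpow_neg (by linarith : (0:ℝ) ≤ 1 - q1 ^ 2 * z ^ 2)]
  linarith

lemma hh_anti_le {q1 q2 z : ℝ} (h0 : 0 ≤ q1) (h12 : q1 ≤ q2) (hq2 : q2 < 1)
    (hz : z ∈ Icc (0:ℝ) 1) : hh q2 z ≤ hh q1 z := by
  have hz2 : z ^ 2 ≤ 1 := by nlinarith [hz.1, hz.2]
  have hx2 : 0 < 1 - q2 ^ 2 * z ^ 2 := by nlinarith [sq_nonneg z]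
  have hx12 : 1 - q2 ^ 2 * z ^ 2 ≤ 1 - q1 ^ 2 * z ^ 2 := by
    have hq12 : q1 ^ 2 ≤ q2 ^ 2 := by nlinarith
    nlinarith [mul_le_mul_of_nonneg_right hq12 (sq_nonneg z)]
  have hs : (1 - q2 ^ 2 * z ^ 2) ^ ((1/2):ℝ) ≤ (1 - q1 ^ 2 * z ^ 2) ^ ((1/2):ℝ) :=
    Real.rpow_le_rpow hx2.le hx12 (by norm_num)
  have hs2 : 0 < (1 - q2 ^ 2 * z ^ 2) ^ ((1/2):ℝ) := Real.rpow_pos_of_pos hx2 _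
  have hinv : ((1 - q1 ^ 2 * z ^ 2) ^ ((1/2):ℝ))⁻¹ ≤ ((1 - q2 ^ 2 * z ^ 2) ^ ((1/2):ℝ))⁻¹ :=
    inv_anti₀ hs2 hs
  unfold hh
  rw [Real.rpow_neg hx2.le, Real.rpow_neg (by linarith : (0:ℝ) ≤ 1 - q1 ^ 2 * z ^ 2)]
  linarith

lemma hh_le_two {q z : ℝ} (hx : 0 < 1 - q ^ 2 * z ^ 2) (hx1 : 1 - q ^ 2 * z ^ 2 ≤ 1) :
    hh q z ≤ 2 := by
  have hs1 : (1 - q ^ 2 * z ^ 2) ^ ((1/2):ℝ) ≤ 1 := Real.rpow_le_one hx.le hx1 (by norm_num)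
  have hs : 0 < (1 - q ^ 2 * z ^ 2) ^ ((1/2):ℝ) := Real.rpow_pos_of_pos hx _
  unfold hh
  rw [Real.rpow_neg hx.le]
  have : 0 < ((1 - q ^ 2 * z ^ 2) ^ ((1/2):ℝ))⁻¹ := by positivity
  linarith

lemma abs_hh_le {q z : ℝ} (hq : q ∈ Ico (0:ℝ) 1) (hz : z ∈ Icc (0:ℝ) 1) :
    |hh q z| ≤ 2 + (1 - q ^ 2) ^ (-(1/2) : ℝ) := by
  have hx : 0 < 1 - q ^ 2 * z ^ 2 := base_pos hq hz
  have hq2 : 0 < 1 - q ^ 2 := by nlinarith [hq.1, hq.2]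
  have hz2 : z ^ 2 ≤ 1 := by nlinarith [hz.1, hz.2]
  have hxge : 1 - q ^ 2 ≤ 1 - q ^ 2 * z ^ 2 := by
    nlinarith [mul_le_mul_of_nonneg_left hz2 (sq_nonneg q)]
  have hs1 : (1 - q ^ 2 * z ^ 2) ^ ((1/2):ℝ) ≤ 1 :=
    Real.rpow_le_one hx.le (by nlinarith [sq_nonneg q, sq_nonneg z]) (by norm_num)
  have hs : 0 < (1 - q ^ 2 * z ^ 2) ^ ((1/2):ℝ) := Real.rpow_pos_of_pos hx _
  have hbnd : (1 - q ^ 2 * z ^ 2) ^ (-(1/2):ℝ) ≤ (1 - q ^ 2) ^ (-(1/2):ℝ) :=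
    Real.rpow_le_rpow_of_nonpos hq2 hxge (by norm_num)
  have hpos : 0 < (1 - q ^ 2 * z ^ 2) ^ (-(1/2):ℝ) := Real.rpow_pos_of_pos hx _
  unfold hh
  rw [abs_le]
  constructor <;> nlinarith

lemma GG_anti {p q1 q2 : ℝ} (hp : 1 < p) (h0 : 0 ≤ q1) (h12 : q1 < q2) (hq2 : q2 < 1) :
    GG p q2 < GG p q1 := by
  have h1 := intable_integrand hp (⟨h0, lt_trans h12 hq2⟩ : q1 ∈ Ico (0:ℝ) 1)
  have h2 := intable_integrand hp (⟨le_trans h0 h12.le, hq2⟩ : q2 ∈ Ico (0:ℝ) 1)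
  have key : 0 < ∫ z in (0:ℝ)..1, (hh q1 z * wP p z - hh q2 z * wP p z) := by
    apply intervalIntegral_pos_of_pos_on (h1.sub h2) _ (by norm_num)
    intro z hz
    have hd : hh q2 z < hh q1 z := hh_anti h0 h12 hq2 ⟨hz.1, hz.2.le⟩
    have hw : 0 < wP p z := wP_pos ⟨hz.1.le, hz.2⟩
    nlinarith
  unfold GG
  rw [intervalIntegral.integral_sub h1 h2] at key
  linarith

lemma GG_pos_of_small {p q : ℝ} (hp : 1 < p) (h0 : 0 ≤ q) (hq : q < 1)
    (h2 : 2 * q ^ 2 ≤ 1) : 0 < GG p q := by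
  apply intervalIntegral_pos_of_pos_on (intable_integrand hp ⟨h0, hq⟩) _ (by norm_num)
  intro z hz
  have hx : 0 < 1 - q ^ 2 * z ^ 2 := base_pos ⟨h0, hq⟩ ⟨hz.1.le, hz.2.le⟩
  have hz2 : z ^ 2 < 1 := by nlinarith [hz.1, hz.2]
  have : 2 * q ^ 2 * z ^ 2 < 1 := by nlinarith [sq_nonneg z, sq_nonneg q]
  exact mul_pos (hh_pos hx this) (wP_pos ⟨hz.1.le, hz.2⟩)

lemma GG_eq {p q : ℝ} (hp : 1 < p) (hq : q ∈ Ico (0:ℝ) 1) :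
    2 * E1 p q - K1 p q = GG p q := by
  have hA : IntervalIntegrable
      (fun z => (1 - q ^ 2 * z ^ 2) ^ ((1/2) : ℝ) * wP p z) volume 0 1 :=
    intable_mul_wP hp (cont_rpow_base hq)
  have hB : IntervalIntegrable
      (fun z => (1 - q ^ 2 * z ^ 2) ^ (-(1/2) : ℝ) * wP p z) volume 0 1 :=
    intable_mul_wP hp (cont_rpow_base hq)
  unfold E1 K1 GG
  have hE : (∫ z in (0:ℝ)..1, (1 - q ^ 2 * z ^ 2) ^ ((1/2) : ℝ) * (1 - z ^ 2) ^ (-(1 / p)))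
      = ∫ z in (0:ℝ)..1, (1 - q ^ 2 * z ^ 2) ^ ((1/2) : ℝ) * wP p z := rfl
  have hK : (∫ z in (0:ℝ)..1, (1 - q ^ 2 * z ^ 2) ^ (-(1/2) : ℝ) * (1 - z ^ 2) ^ (-(1 / p)))
      = ∫ z in (0:ℝ)..1, (1 - q ^ 2 * z ^ 2) ^ (-(1/2) : ℝ) * wP p z := rfl
  rw [hE, hK, ← intervalIntegral.integral_const_mul,
    ← intervalIntegral.integral_sub (hA.const_mul 2) hB]
  apply intervalIntegral.integral_congr
  intro z _
  unfold hh
  ring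

lemma GG_pos_of_root {p1 p2 q : ℝ} (hp1 : 1 < p1) (hp12 : p1 < p2) (hq0 : 0 < q) (hq1 : q < 1)
    (hroot : GG p1 q = 0) : 0 < GG p2 q := by
  have hq : q ∈ Ico (0:ℝ) 1 := ⟨hq0.le, hq1⟩
  have hp2 : 1 < p2 := lt_trans hp1 hp12
  set c : ℝ := 1 / p1 - 1 / p2 with hc
  have hcpos : 0 < c := by
    rw [hc]
    have : 1 / p2 < 1 / p1 := by
      apply one_div_lt_one_div_of_lt <;> linarith
    linarith
  set r : ℝ → ℝ := fun z => (1 - z ^ 2) ^ c with hr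
  have hw2 : ∀ z ∈ Icc (0:ℝ) 1, wP p2 z = r z * wP p1 z := by
    intro z hz
    rcases eq_or_lt_of_le hz.2 with h1 | h1
    · have hb : (1:ℝ) - z ^ 2 = 0 := by rw [h1]; ring
      simp only [wP, hr, hb]
      rw [Real.zero_rpow (by positivity : c ≠ 0), Real.zero_rpow, zero_mul]
      simp only [ne_eq, neg_eq_zero, div_eq_zero_iff]
      push_neg
      constructor <;> intro h <;> [exact absurd h one_ne_zero; linarith]
    · have hb : 0 < 1 - z ^ 2 := by nlinarith [hz.1]
      simp only [wP, hr]
      rw [← Real.rpow_add hb]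
      congr 1
      rw [hc]; ring
  -- rewrite GG p2 q as integral of r * φ where φ is the p1-integrand
  have hGG2 : GG p2 q = ∫ z in (0:ℝ)..1, r z * (hh q z * wP p1 z) := by
    unfold GG
    apply intervalIntegral.integral_congr
    intro z hz
    rw [Set.uIcc_of_le (by norm_num : (0:ℝ) ≤ 1)] at hz
    show hh q z * wP p2 z = r z * (hh q z * wP p1 z)
    rw [hw2 z hz]; ring
  have hrcont : ContinuousOn r (Icc 0 1) := by
    apply ContinuousOn.rpow_const
    · exact (continuous_const.sub (continuous_pow 2)).continuousOn
    · intro z _; exact Or.inr hcpos.le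
  by_cases hsmall : 2 * q ^ 2 ≤ 1
  · exact absurd hroot (ne_of_gt (GG_pos_of_small hp1 hq0.le hq1 hsmall))
  push_neg at hsmall
  -- the sign-change point z₀
  set z₀ : ℝ := Real.sqrt (1 / (2 * q ^ 2)) with hz₀
  have h2q : (0:ℝ) < 2 * q ^ 2 := by positivity
  have hz₀sq : z₀ ^ 2 = 1 / (2 * q ^ 2) := Real.sq_sqrt (by positivity)
  have hz₀pos : 0 < z₀ := Real.sqrt_pos.2 (by positivity)
  have hz₀lt : z₀ < 1 := by
    rw [show (1:ℝ) = Real.sqrt 1 by simp [Real.sqrt_one]]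
    apply Real.sqrt_lt_sqrt (by positivity)
    rw [div_lt_one h2q]; linarith
  have hkey : 2 * q ^ 2 * z₀ ^ 2 = 1 := by
    rw [hz₀sq]; field_simp
  -- integrabilities
  have hφ : IntervalIntegrable (fun z => hh q z * wP p1 z) volume 0 1 :=
    intable_integrand hp1 hq
  have hrφ : IntervalIntegrable (fun z => r z * (hh q z * wP p1 z)) volume 0 1 := by
    have := intable_mul_wP hp1 ((hrcont.mul (hh_contOn hq)))
    simpa only [Pi.mul_apply, mul_assoc] using this
  have hshift : IntervalIntegrable (fun z => (r z - r z₀) * (hh q z * wP p1 z)) volume 0 1 := by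
    have := intable_mul_wP hp1 (((hrcont.sub (continuousOn_const (c := r z₀))).mul (hh_contOn hq)))
    simpa only [Pi.mul_apply, Pi.sub_apply, mul_assoc] using this
  -- split ∫ r φ = ∫ (r - r z₀) φ + r z₀ ∫ φ
  have hsplit : GG p2 q = (∫ z in (0:ℝ)..1, (r z - r z₀) * (hh q z * wP p1 z))
      + r z₀ * GG p1 q := by
    rw [hGG2]
    unfold GG
    rw [← intervalIntegral.integral_const_mul,
      ← intervalIntegral.integral_add hshift ((intable_integrand hp1 hq).const_mul (r z₀))]
    apply intervalIntegral.integral_congr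
    intro z _; ring
  rw [hsplit, hroot, mul_zero, add_zero]
  -- split at z₀
  have hmono1 : IntervalIntegrable (fun z => (r z - r z₀) * (hh q z * wP p1 z)) volume 0 z₀ := by
    apply hshift.mono_set
    rw [Set.uIcc_of_le hz₀pos.le, Set.uIcc_of_le (by norm_num : (0:ℝ) ≤ 1)]
    exact Set.Icc_subset_Icc le_rfl hz₀lt.le
  have hmono2 : IntervalIntegrable (fun z => (r z - r z₀) * (hh q z * wP p1 z)) volume z₀ 1 := by
    apply hshift.mono_set
    rw [Set.uIcc_of_le hz₀lt.le, Set.uIcc_of_le (by norm_num : (0:ℝ) ≤ 1)]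
    exact Set.Icc_subset_Icc hz₀pos.le le_rfl
  rw [← intervalIntegral.integral_add_adjacent_intervals hmono1 hmono2]
  have hI1 : 0 < ∫ z in (0:ℝ)..z₀, (r z - r z₀) * (hh q z * wP p1 z) := by
    apply intervalIntegral_pos_of_pos_on hmono1 _ hz₀pos
    intro z hz
    have hzIcc : z ∈ Icc (0:ℝ) 1 := ⟨hz.1.le, by linarith [hz.2, hz₀lt]⟩
    have hrgt : r z₀ < r z := by
      apply Real.rpow_lt_rpow (by nlinarith [hz₀lt] : (0:ℝ) ≤ 1 - z₀ ^ 2) _ hcpos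
      nlinarith [hz.1, hz.2, hz₀pos]
    have hhpos : 0 < hh q z := by
      apply hh_pos (base_pos hq hzIcc)
      calc 2 * q ^ 2 * z ^ 2 < 2 * q ^ 2 * z₀ ^ 2 := by
            apply mul_lt_mul_of_pos_left _ h2q
            nlinarith [hz.1, hz.2]
        _ = 1 := hkey
    have hw : 0 < wP p1 z := wP_pos ⟨hzIcc.1, by linarith [hz.2, hz₀lt]⟩
    have := mul_pos (sub_pos.2 hrgt) (mul_pos hhpos hw)
    linarith
  have hI2 : 0 ≤ ∫ z in z₀..1, (r z - r z₀) * (hh q z * wP p1 z) := by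
    apply intervalIntegral.integral_nonneg hz₀lt.le
    intro z hz
    have hzIcc : z ∈ Icc (0:ℝ) 1 := ⟨by linarith [hz.1, hz₀pos], hz.2⟩
    have hrle : r z ≤ r z₀ := by
      apply Real.rpow_le_rpow (by nlinarith [hzIcc.1, hzIcc.2] : (0:ℝ) ≤ 1 - z ^ 2) _ hcpos.le
      nlinarith [hz.1, hz₀pos]
    have hhle : hh q z ≤ 0 := by
      apply hh_nonpos (base_pos hq hzIcc)
      rw [← hkey]
      apply mul_le_mul_of_nonneg_left _ h2q.le
      nlinarith [hz.1, hz₀pos]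
    have hw : 0 ≤ wP p1 z := wP_nonneg hzIcc
    have := mul_nonneg (neg_nonneg.2 (sub_nonpos.2 hrle)) (mul_nonneg (neg_nonneg.2 hhle) hw)
    nlinarith
  linarith

lemma hh_meas (q : ℝ) : Measurable (hh q) := by
  unfold hh
  have hb : Measurable (fun z : ℝ => 1 - q ^ 2 * z ^ 2) :=
    measurable_const.sub ((measurable_id.pow_const 2).const_mul (q ^ 2))
  exact (((measurable_rpow_const _).comp hb).const_mul 2).sub ((measurable_rpow_const _).comp hb)

/-- `wP` is antitone in `p` on `[0,1]`. -/
lemma wP_mono_p {p1 p2 z : ℝ} (hp1 : 1 < p1) (hp12 : p1 ≤ p2) (hz : z ∈ Icc (0:ℝ) 1) :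
    wP p2 z ≤ wP p1 z := by
  rcases eq_or_lt_of_le hz.2 with h1 | h1
  · have hb : (1:ℝ) - z ^ 2 = 0 := by rw [h1]; ring
    unfold wP
    rw [hb, Real.zero_rpow, Real.zero_rpow] <;>
      simp only [ne_eq, neg_eq_zero, one_div, inv_eq_zero] <;> intro h <;> linarith
  · have hb : 0 < 1 - z ^ 2 := by nlinarith [hz.1]
    have hb1 : 1 - z ^ 2 ≤ 1 := by nlinarith [hz.1]
    apply Real.rpow_le_rpow_of_exponent_ge hb hb1
    have h1 : 1 / p2 ≤ 1 / p1 := by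
      apply one_div_le_one_div_of_le <;> linarith
    linarith

lemma GG_tendsto {q p₀ : ℝ} (hq0 : 0 < q) (hq1 : q < 1) (hp₀ : 1 < p₀) :
    Tendsto (fun p => GG p q) (nhdsWithin p₀ (Ioi 1)) (nhds (GG p₀ q)) := by
  have hq : q ∈ Ico (0:ℝ) 1 := ⟨hq0.le, hq1⟩
  set p' : ℝ := (1 + p₀) / 2 with hp'
  have hp'1 : 1 < p' := by rw [hp']; linarith
  have hp'p₀ : p' < p₀ := by rw [hp']; linarith
  set C : ℝ := 2 + (1 - q ^ 2) ^ (-(1/2) : ℝ) with hC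
  have hCnn : 0 ≤ C := by
    have : 0 ≤ (1 - q ^ 2) ^ (-(1/2) : ℝ) := Real.rpow_nonneg (by nlinarith) _
    rw [hC]; linarith
  unfold GG
  apply intervalIntegral.tendsto_integral_filter_of_dominated_convergence
      (bound := fun z => C * wP p' z)
  · filter_upwards with p
    exact ((hh_meas q).mul (wP_meas p)).aestronglyMeasurable
  · have hmem : Ioi p' ∈ nhdsWithin p₀ (Ioi 1) :=
      nhdsWithin_le_nhds (isOpen_Ioi.mem_nhds hp'p₀)
    filter_upwards [hmem] with p hp
    filter_upwards with z hz
    rw [Set.uIoc_of_le (by norm_num : (0:ℝ) ≤ 1)] at hz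
    have hzI : z ∈ Icc (0:ℝ) 1 := ⟨hz.1.le, hz.2⟩
    rw [Real.norm_eq_abs, abs_mul, abs_of_nonneg (wP_nonneg hzI)]
    exact mul_le_mul (abs_hh_le hq hzI) (wP_mono_p hp'1 (le_of_lt hp) hzI)
      (wP_nonneg hzI) hCnn
  · exact (intable_wP hp'1).const_mul C
  · filter_upwards with z hz
    rw [Set.uIoc_of_le (by norm_num : (0:ℝ) ≤ 1)] at hz
    rcases eq_or_lt_of_le hz.2 with h1 | h1
    · have hzero : ∀ p : ℝ, 1 < p → hh q z * wP p z = 0 := by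
        intro p hp
        have hb : (1:ℝ) - z ^ 2 = 0 := by rw [h1]; ring
        have : wP p z = 0 := by
          unfold wP; rw [hb, Real.zero_rpow]
          simp only [ne_eq, neg_eq_zero, one_div, inv_eq_zero]; intro h; linarith
        rw [this, mul_zero]
      rw [hzero p₀ hp₀]
      apply Tendsto.congr' _ tendsto_const_nhds
      filter_upwards [self_mem_nhdsWithin] with p hp
      exact (hzero p hp).symm
    · have hb : 0 < 1 - z ^ 2 := by nlinarith [hz.1]
      apply Tendsto.const_mul
      have h2 : Tendsto (fun p : ℝ => -(1/p)) (nhdsWithin p₀ (Ioi 1)) (nhds (-(1/p₀))) := by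
        apply Tendsto.mono_left _ nhdsWithin_le_nhds
        exact ((continuousAt_const.div continuousAt_id (by simp only [id_eq]; exact ne_of_gt (by linarith))).neg)
      have h3 : ContinuousAt (fun y : ℝ => (1 - z ^ 2) ^ y) (-(1/p₀)) :=
        Real.continuousAt_const_rpow hb.ne'
      exact (h3.tendsto).comp h2

lemma integral_one_sub_rpow {a p : ℝ} (hp : 1 < p) (ha : 0 ≤ a) (ha1 : a ≤ 1) :
    ∫ z in a..1, (1 - z) ^ (-(1/p)) = (1 - a) ^ (1 - 1/p) / (1 - 1/p) := by
  have hr : (-1 : ℝ) < -(1/p) := by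
    have : 1/p < 1 := by rw [div_lt_one (by linarith)]; linarith
    linarith
  have h := intervalIntegral.integral_comp_sub_left (a := a) (b := 1)
    (fun u => u ^ (-(1/p) : ℝ)) 1
  rw [h, show (1:ℝ) - 1 = 0 by norm_num]
  rw [integral_rpow (Or.inl hr)]
  have hpow : (0:ℝ) ^ (-(1/p) + 1) = 0 := by
    apply Real.zero_rpow; intro hcontra
    have : 1/p < 1 := by rw [div_lt_one (by linarith)]; linarith
    linarith
  rw [hpow]
  rw [show -(1/p) + 1 = 1 - 1/p by ring]
  ring

lemma hh_anti_z {q z1 z2 : ℝ} (hq : q ∈ Ico (0:ℝ) 1) (h0 : 0 ≤ z1) (h12 : z1 ≤ z2)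
    (hz2 : z2 ≤ 1) : hh q z2 ≤ hh q z1 := by
  have hx2 : 0 < 1 - q ^ 2 * z2 ^ 2 := base_pos hq ⟨le_trans h0 h12, hz2⟩
  have hx12 : 1 - q ^ 2 * z2 ^ 2 ≤ 1 - q ^ 2 * z1 ^ 2 := by
    have : z1 ^ 2 ≤ z2 ^ 2 := by nlinarith
    nlinarith [mul_le_mul_of_nonneg_left this (sq_nonneg q)]
  have hs : (1 - q ^ 2 * z2 ^ 2) ^ ((1/2):ℝ) ≤ (1 - q ^ 2 * z1 ^ 2) ^ ((1/2):ℝ) :=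
    Real.rpow_le_rpow hx2.le hx12 (by norm_num)
  have hs2 : 0 < (1 - q ^ 2 * z2 ^ 2) ^ ((1/2):ℝ) := Real.rpow_pos_of_pos hx2 _
  have hinv : ((1 - q ^ 2 * z1 ^ 2) ^ ((1/2):ℝ))⁻¹ ≤ ((1 - q ^ 2 * z2 ^ 2) ^ ((1/2):ℝ))⁻¹ :=
    inv_anti₀ hs2 hs
  unfold hh
  rw [Real.rpow_neg hx2.le, Real.rpow_neg (by linarith : (0:ℝ) ≤ 1 - q ^ 2 * z1 ^ 2)]
  linarith

/-- lower bound `(1/2) * (1-z)^(-1/p) ≤ wP p z` on `[0,1]`. -/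
lemma wP_ge {p z : ℝ} (hp : 1 < p) (hz : z ∈ Icc (0:ℝ) 1) :
    (1/2) * (1 - z) ^ (-(1/p)) ≤ wP p z := by
  rcases eq_or_lt_of_le hz.2 with h1 | h1
  · have hb : (1:ℝ) - z = 0 := by rw [h1]; ring
    have hb2 : (1:ℝ) - z ^ 2 = 0 := by rw [h1]; ring
    have hne : -(1/p) ≠ 0 := by
      simp only [ne_eq, neg_eq_zero, one_div, inv_eq_zero]; intro h; linarith
    unfold wP
    rw [hb, hb2, Real.zero_rpow hne]
    norm_num
  · have hb : 0 < 1 - z := by linarith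
    have hfac : (1:ℝ) - z ^ 2 = (1 - z) * (1 + z) := by ring
    unfold wP
    rw [hfac, Real.mul_rpow hb.le (by linarith [hz.1])]
    have h2 : (1/2 : ℝ) ≤ (1 + z) ^ (-(1/p)) := by
      have ha : (2:ℝ) ^ (-(1/p) : ℝ) ≤ (1 + z) ^ (-(1/p)) := by
        apply Real.rpow_le_rpow_of_nonpos (by linarith [hz.1]) (by linarith [hz.2])
        rw [neg_nonpos]; positivity
      have hb2 : (2:ℝ) ^ (-(1:ℝ)) ≤ (2:ℝ) ^ (-(1/p) : ℝ) := by
        apply Real.rpow_le_rpow_of_exponent_le (by norm_num)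
        have : 1/p < 1 := by rw [div_lt_one (by linarith)]; linarith
        linarith
      have : (2:ℝ) ^ (-(1:ℝ)) = 1/2 := by
        rw [Real.rpow_neg_one]; norm_num
      linarith
    calc (1/2) * (1 - z) ^ (-(1/p))
        ≤ (1 + z) ^ (-(1/p)) * (1 - z) ^ (-(1/p)) := by
          apply mul_le_mul_of_nonneg_right h2 (Real.rpow_nonneg hb.le _)
      _ = (1 - z) ^ (-(1/p)) * (1 + z) ^ (-(1/p)) := by ring

set_option maxHeartbeats 1000000 in
lemma GG_eventually_neg {q : ℝ} (hq0 : 0 < q) (hq1 : q < 1) (h2 : 1 < 2 * q ^ 2) :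
    ∀ᶠ p in nhdsWithin 1 (Ioi 1), GG p q < 0 := by
  have hq : q ∈ Ico (0:ℝ) 1 := ⟨hq0.le, hq1⟩
  set z₀ : ℝ := Real.sqrt (1 / (2 * q ^ 2)) with hz₀
  have h2q : (0:ℝ) < 2 * q ^ 2 := by positivity
  have hz₀sq : z₀ ^ 2 = 1 / (2 * q ^ 2) := Real.sq_sqrt (by positivity)
  have hz₀pos : 0 < z₀ := Real.sqrt_pos.2 (by positivity)
  have hz₀lt : z₀ < 1 := by
    rw [show (1:ℝ) = Real.sqrt 1 by simp [Real.sqrt_one]]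
    apply Real.sqrt_lt_sqrt (by positivity)
    rw [div_lt_one h2q]; linarith
  have hkey : 2 * q ^ 2 * z₀ ^ 2 = 1 := by rw [hz₀sq]; field_simp
  set z₁ : ℝ := (z₀ + 1) / 2 with hz₁
  have hz₁0 : 0 < z₁ := by rw [hz₁]; linarith
  have hz₁lt : z₁ < 1 := by rw [hz₁]; linarith
  have hz₀z₁ : z₀ < z₁ := by rw [hz₁]; linarith
  have hδpos : 0 < -hh q z₁ := by
    rw [neg_pos]
    apply hh_neg (base_pos hq ⟨hz₁0.le, hz₁lt.le⟩)
    rw [← hkey]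
    apply mul_lt_mul_of_pos_left _ h2q
    nlinarith
  set δ : ℝ := -hh q z₁ with hδ
  set B : ℝ := (1 - z₁ ^ 2) ^ (-(1:ℝ)) with hB
  have hz₁sq : 0 < 1 - z₁ ^ 2 := by nlinarith
  have hBpos : 0 < B := Real.rpow_pos_of_pos hz₁sq _
  set R : ℝ := δ * (1 - z₁) / 4 with hR
  have hRpos : 0 < R := by
    rw [hR]; apply div_pos (mul_pos hδpos (by linarith)) (by norm_num)
  -- the key estimate
  have hest : ∀ p : ℝ, 1 < p → GG p q ≤ 2 * B - R / (p - 1) := by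
    intro p hp
    have hint : IntervalIntegrable (fun z => hh q z * wP p z) volume 0 1 :=
      intable_integrand hp hq
    have hint1 : IntervalIntegrable (fun z => hh q z * wP p z) volume 0 z₁ := by
      apply hint.mono_set
      rw [Set.uIcc_of_le hz₁0.le, Set.uIcc_of_le (by norm_num : (0:ℝ) ≤ 1)]
      exact Set.Icc_subset_Icc le_rfl hz₁lt.le
    have hint2 : IntervalIntegrable (fun z => hh q z * wP p z) volume z₁ 1 := by
      apply hint.mono_set
      rw [Set.uIcc_of_le hz₁lt.le, Set.uIcc_of_le (by norm_num : (0:ℝ) ≤ 1)]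
      exact Set.Icc_subset_Icc hz₁0.le le_rfl
    have hsplit : GG p q = (∫ z in (0:ℝ)..z₁, hh q z * wP p z)
        + ∫ z in z₁..(1:ℝ), hh q z * wP p z := by
      unfold GG
      rw [intervalIntegral.integral_add_adjacent_intervals hint1 hint2]
    -- first piece
    have hfirst : (∫ z in (0:ℝ)..z₁, hh q z * wP p z) ≤ 2 * B := by
      have hmono : ∀ z ∈ Icc (0:ℝ) z₁, hh q z * wP p z ≤ 2 * B := by
        intro z hz
        have hzI : z ∈ Icc (0:ℝ) 1 := ⟨hz.1, le_trans hz.2 hz₁lt.le⟩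
        have hw : 0 ≤ wP p z := wP_nonneg hzI
        have hhle : hh q z ≤ 2 := hh_le_two (base_pos hq hzI)
          (by nlinarith [mul_nonneg (sq_nonneg q) (sq_nonneg z)])
        have hwle : wP p z ≤ B := by
          have hb : 0 < 1 - z ^ 2 := by nlinarith [hz.1, hz.2]
          have hb1 : 1 - z₁ ^ 2 ≤ 1 - z ^ 2 := by
            nlinarith [mul_le_mul hz.2 hz.2 hz.1 (le_trans hz.1 hz.2)]
          have step1 : wP p z ≤ (1 - z₁ ^ 2) ^ (-(1/p) : ℝ) :=
            Real.rpow_le_rpow_of_nonpos hz₁sq hb1 (by rw [neg_nonpos]; positivity)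
          have step2 : (1 - z₁ ^ 2) ^ (-(1/p) : ℝ) ≤ B := by
            rw [hB]
            apply Real.rpow_le_rpow_of_exponent_ge hz₁sq (by nlinarith)
            have : 1/p < 1 := by rw [div_lt_one (by linarith)]; linarith
            linarith
          linarith
        calc hh q z * wP p z ≤ 2 * wP p z := mul_le_mul_of_nonneg_right hhle hw
          _ ≤ 2 * B := by linarith
      calc (∫ z in (0:ℝ)..z₁, hh q z * wP p z) ≤ ∫ _z in (0:ℝ)..z₁, 2 * B :=
            intervalIntegral.integral_mono_on hz₁0.le hint1 intervalIntegrable_const hmono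
        _ = z₁ * (2 * B) := by
            rw [intervalIntegral.integral_const, smul_eq_mul, sub_zero]
        _ ≤ 2 * B := by nlinarith
    -- second piece
    have hwint : IntervalIntegrable (wP p) volume z₁ 1 := by
      apply (intable_wP hp).mono_set
      rw [Set.uIcc_of_le hz₁lt.le, Set.uIcc_of_le (by norm_num : (0:ℝ) ≤ 1)]
      exact Set.Icc_subset_Icc hz₁0.le le_rfl
    have hsecond : (∫ z in z₁..(1:ℝ), hh q z * wP p z) ≤ -δ * ∫ z in z₁..(1:ℝ), wP p z := by
      rw [← intervalIntegral.integral_const_mul]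
      apply intervalIntegral.integral_mono_on hz₁lt.le hint2 (hwint.const_mul _)
      intro z hz
      have hzI : z ∈ Icc (0:ℝ) 1 := ⟨le_trans hz₁0.le hz.1, hz.2⟩
      have hhle : hh q z ≤ -δ := by
        rw [hδ, neg_neg]
        exact hh_anti_z hq hz₁0.le hz.1 hz.2
      exact mul_le_mul_of_nonneg_right hhle (wP_nonneg hzI)
    have hwlow : (1/2) * ((1 - z₁) ^ (1 - 1/p) / (1 - 1/p)) ≤ ∫ z in z₁..(1:ℝ), wP p z := by
      rw [← integral_one_sub_rpow hp hz₁0.le hz₁lt.le, ← intervalIntegral.integral_const_mul]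
      apply intervalIntegral.integral_mono_on hz₁lt.le _ hwint
      · intro z hz
        exact wP_ge hp ⟨le_trans hz₁0.le hz.1, hz.2⟩
      · apply ((intable_one_sub_rpow (by
          have : 1/p < 1 := by rw [div_lt_one (by linarith)]; linarith
          linarith : (-1:ℝ) < -(1/p))).mono_set _).const_mul
        rw [Set.uIcc_of_le hz₁lt.le, Set.uIcc_of_le (by norm_num : (0:ℝ) ≤ 1)]
        exact Set.Icc_subset_Icc hz₁0.le le_rfl
    -- combine
    have hp1 : 0 < 1 - 1/p := by
      have : 1/p < 1 := by rw [div_lt_one (by linarith)]; linarith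
      linarith
    have hnum : (1 - z₁ : ℝ) ≤ (1 - z₁) ^ (1 - 1/p : ℝ) := by
      have := Real.rpow_le_rpow_of_exponent_ge (by linarith : (0:ℝ) < 1 - z₁)
        (by linarith : (1:ℝ) - z₁ ≤ 1)
        (by have : (0:ℝ) < 1/p := by positivity
            linarith : 1 - 1/p ≤ 1)
      rwa [Real.rpow_one] at this
    have hple : 1 - 1/p ≤ p - 1 := by
      have h0p : (0:ℝ) < p := by linarith
      have e : (1:ℝ) - 1/p = (p-1)/p := by field_simp
      rw [e, div_le_iff₀ h0p]
      nlinarith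
    have hW : R / (p - 1) ≤ δ * ((1/2) * ((1 - z₁) ^ (1 - 1/p) / (1 - 1/p))) := by
      have hd1 : (1 - z₁) / (p - 1) ≤ (1 - z₁) / (1 - 1/p) :=
        div_le_div_of_nonneg_left (by linarith) hp1 hple
      have hd2 : (1 - z₁) / (1 - 1/p) ≤ (1 - z₁) ^ ((1:ℝ) - 1/p) / (1 - 1/p) :=
        (div_le_div_iff_of_pos_right hp1).2 hnum
      have hnn : 0 ≤ (1 - z₁) ^ ((1:ℝ) - 1/p) / (1 - 1/p) :=
        div_nonneg (Real.rpow_nonneg (by linarith) _) hp1.le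
      calc R / (p-1) = (δ/4) * ((1-z₁)/(p-1)) := by rw [hR]; ring
        _ ≤ (δ/4) * ((1-z₁) ^ ((1:ℝ) - 1/p)/(1-1/p)) := by
            apply mul_le_mul_of_nonneg_left (le_trans hd1 hd2); linarith
        _ ≤ δ * ((1/2) * ((1-z₁) ^ ((1:ℝ) - 1/p)/(1-1/p))) := by nlinarith [hδpos]
    have hWpos : 0 ≤ ∫ z in z₁..(1:ℝ), wP p z := by
      apply intervalIntegral.integral_nonneg hz₁lt.le
      intro z hz
      exact wP_nonneg ⟨le_trans hz₁0.le hz.1, hz.2⟩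
    have hfin : -δ * ∫ z in z₁..(1:ℝ), wP p z ≤ - (R / (p - 1)) := by
      have hmm := mul_le_mul_of_nonneg_left hwlow (le_of_lt hδpos)
      nlinarith [hmm, hW]
    rw [hsplit]
    have h9 : (∫ z in z₁..(1:ℝ), hh q z * wP p z) ≤ - (R/(p-1)) := le_trans hsecond hfin
    linarith [hfirst, h9]
  -- conclude
  have hmem : Ioo (1:ℝ) (1 + R / (2 * B + 1)) ∈ nhdsWithin 1 (Ioi (1:ℝ)) :=
    Ioo_mem_nhdsGT_of_mem ⟨le_rfl, by
      have : 0 < R / (2 * B + 1) := div_pos hRpos (by linarith)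
      linarith⟩
  filter_upwards [hmem] with p hp
  have hp1 : 1 < p := hp.1
  have hub : p - 1 < R / (2 * B + 1) := by linarith [hp.2]
  have h2B : 2 * B < R / (p - 1) := by
    rw [lt_div_iff₀ (by linarith : (0:ℝ) < p - 1)]
    calc 2 * B * (p - 1) < 2 * B * (R / (2 * B + 1)) + 1 * (R / (2*B+1)) := by
          nlinarith [hBpos, hub, hRpos]
      _ = (2 * B + 1) * (R / (2 * B + 1)) := by ring
      _ = R := by field_simp
  linarith [hest p hp1]

lemma integral_hh {q : ℝ} (hq : q ∈ Ico (0:ℝ) 1) :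
    ∫ z in (0:ℝ)..1, hh q z = (1 - q ^ 2) ^ ((1/2) : ℝ) := by
  have hderiv : ∀ z ∈ Set.uIcc (0:ℝ) 1,
      HasDerivAt (fun z => z * (1 - q ^ 2 * z ^ 2) ^ ((1/2):ℝ)) (hh q z) z := by
    intro z hz
    rw [Set.uIcc_of_le (by norm_num : (0:ℝ) ≤ 1)] at hz
    have hx : 0 < 1 - q ^ 2 * z ^ 2 := base_pos hq hz
    have hbase : HasDerivAt (fun z : ℝ => 1 - q ^ 2 * z ^ 2) (-(q ^ 2 * (2 * z))) z := by
      have h1 := ((hasDerivAt_pow 2 z).const_mul (q ^ 2)).const_sub 1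
      simpa using h1
    have hrpow := hbase.rpow_const (p := ((1/2):ℝ)) (Or.inl hx.ne')
    have hF := (hasDerivAt_id z).mul hrpow
    refine hF.congr_deriv ?_
    have he : ((1/2):ℝ) - 1 = -(1/2) := by norm_num
    rw [he]
    have hxx : (1 - q ^ 2 * z ^ 2) * (1 - q ^ 2 * z ^ 2) ^ (-(1/2):ℝ)
        = (1 - q ^ 2 * z ^ 2) ^ ((1/2):ℝ) := by
      nth_rewrite 1 [← Real.rpow_one (1 - q ^ 2 * z ^ 2)]
      rw [← Real.rpow_add hx]
      norm_num
    unfold hh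
    simp only [id_eq]
    rw [← hxx]
    ring
  rw [intervalIntegral.integral_eq_sub_of_hasDerivAt hderiv (by
    apply ContinuousOn.intervalIntegrable
    rw [Set.uIcc_of_le (by norm_num : (0:ℝ) ≤ 1)]
    exact hh_contOn hq)]
  norm_num

set_option maxHeartbeats 1000000 in
lemma GG_eventually_pos {q : ℝ} (hq0 : 0 < q) (hq1 : q < 1) :
    ∀ᶠ p in atTop, 0 < GG p q := by
  have hq : q ∈ Ico (0:ℝ) 1 := ⟨hq0.le, hq1⟩
  have hq2 : 0 < 1 - q ^ 2 := by nlinarith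
  set C : ℝ := 2 + (1 - q ^ 2) ^ (-(1/2) : ℝ) with hC
  have hCnn : 0 ≤ C := by
    have : 0 ≤ (1 - q ^ 2) ^ (-(1/2) : ℝ) := Real.rpow_nonneg hq2.le _
    rw [hC]; linarith
  set I : ℝ := (1 - q ^ 2) ^ ((1/2) : ℝ) with hI
  have hIpos : 0 < I := Real.rpow_pos_of_pos hq2 _
  have key : ∀ p : ℝ, 1 < p → I - C * (1 / (p - 1)) ≤ GG p q := by
    intro p hp
    have hr : (-1:ℝ) < -(1/p) := by
      have : 1/p < 1 := by rw [div_lt_one (by linarith)]; linarith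
      linarith
    have hint := intable_integrand hp hq
    have hinthh : IntervalIntegrable (hh q) volume 0 1 := by
      apply ContinuousOn.intervalIntegrable
      rw [Set.uIcc_of_le (by norm_num : (0:ℝ) ≤ 1)]
      exact hh_contOn hq
    have hintw := intable_wP hp
    have e1 : GG p q - I = ∫ z in (0:ℝ)..1, (hh q z * wP p z - hh q z) := by
      rw [intervalIntegral.integral_sub hint hinthh, integral_hh hq]
      rfl
    have e2 : (∫ z in (0:ℝ)..1, (-C) * (wP p z - 1))
        ≤ ∫ z in (0:ℝ)..1, (hh q z * wP p z - hh q z) := by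
      apply intervalIntegral.integral_mono_ae_restrict (by norm_num : (0:ℝ) ≤ 1)
        ((hintw.sub intervalIntegrable_const).const_mul _) (hint.sub hinthh)
      have hae : ∀ᵐ z ∂(volume.restrict (Icc (0:ℝ) 1)), z ≠ 1 := by
        refine ae_iff.2 ?_
        have h0 : (volume.restrict (Icc (0:ℝ) 1)) {(1:ℝ)} = 0 := by
          apply le_antisymm _ zero_le
          calc (volume.restrict (Icc (0:ℝ) 1)) {(1:ℝ)} ≤ volume {(1:ℝ)} :=
                Measure.le_iff'.1 Measure.restrict_le_self _
            _ = 0 := Real.volume_singleton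
        convert h0 using 2
        ext z; simp
      filter_upwards [ae_restrict_mem measurableSet_Icc, hae] with z hzI hzne
      have hz1 : z < 1 := lt_of_le_of_ne hzI.2 hzne
      have hw1 : 1 ≤ wP p z := by
        apply Real.one_le_rpow_of_pos_of_le_one_of_nonpos
          (by nlinarith [hzI.1] : (0:ℝ) < 1 - z ^ 2) (by nlinarith [hzI.1])
        rw [neg_nonpos]; positivity
      have habs := abs_hh_le hq hzI
      rw [abs_le] at habs
      have hCle : -C ≤ hh q z := by rw [hC]; exact habs.1
      have hmul := mul_le_mul_of_nonneg_right hCle (by linarith : 0 ≤ wP p z - 1)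
      calc (-C) * (wP p z - 1) ≤ hh q z * (wP p z - 1) := hmul
        _ = hh q z * wP p z - hh q z := by ring
    have e3 : (∫ z in (0:ℝ)..1, (-C) * (wP p z - 1))
        = -C * ((∫ z in (0:ℝ)..1, wP p z) - 1) := by
      rw [intervalIntegral.integral_const_mul,
        intervalIntegral.integral_sub hintw intervalIntegrable_const]
      norm_num
    have e4 : (∫ z in (0:ℝ)..1, wP p z) ≤ 1 / (1 - 1/p) := by
      calc (∫ z in (0:ℝ)..1, wP p z) ≤ ∫ z in (0:ℝ)..1, (1 - z) ^ (-(1/p)) :=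
            intervalIntegral.integral_mono_on (by norm_num) hintw (intable_one_sub_rpow hr)
              (fun z hz => wP_le (by linarith) hz)
        _ = (1 - 0) ^ ((1:ℝ) - 1/p) / (1 - 1/p) := integral_one_sub_rpow hp le_rfl zero_le_one
        _ = 1 / (1 - 1/p) := by rw [sub_zero, Real.one_rpow]
    have hp1 : 0 < 1 - 1/p := by
      have : 1/p < 1 := by rw [div_lt_one (by linarith)]; linarith
      linarith
    have e5 : (∫ z in (0:ℝ)..1, wP p z) - 1 ≤ 1 / (p - 1) := by
      have hkey : 1 / (1 - 1/p) = 1 + 1 / (p - 1) := by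
        have hp0 : p ≠ 0 := by intro h; rw [h] at hp; linarith
        have hpm : p - 1 ≠ 0 := by
          intro h
          have h1 : p = 1 := by linarith
          rw [h1] at hp
          exact lt_irrefl _ hp
        field_simp
        ring
      linarith
    have e6 : -C * (1 / (p - 1)) ≤ -C * ((∫ z in (0:ℝ)..1, wP p z) - 1) :=
      mul_le_mul_of_nonpos_left e5 (neg_nonpos.2 hCnn)
    have h7 : -C * (1 / (p - 1)) ≤ GG p q - I := by
      calc -C * (1 / (p - 1)) ≤ -C * ((∫ z in (0:ℝ)..1, wP p z) - 1) := e6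
        _ = ∫ z in (0:ℝ)..1, (-C) * (wP p z - 1) := e3.symm
        _ ≤ ∫ z in (0:ℝ)..1, (hh q z * wP p z - hh q z) := e2
        _ = GG p q - I := e1.symm
    nlinarith [h7]
  have hBig : ∀ᶠ p in atTop, max 2 (1 + (C + 1) / I) ≤ p := eventually_ge_atTop _
  filter_upwards [hBig] with p hp
  have hp1 : 1 < p := lt_of_lt_of_le (by norm_num) (le_trans (le_max_left _ _) hp)
  have hpge : (C + 1) / I ≤ p - 1 := by
    have := le_trans (le_max_right _ _) hp
    linarith
  have hpm : 0 < p - 1 := by linarith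
  have hfin : C * (1 / (p - 1)) < I := by
    rw [mul_one_div, div_lt_iff₀ hpm]
    have h1 : C + 1 ≤ I * (p - 1) := by
      calc C + 1 = I * ((C + 1) / I) := by field_simp
        _ ≤ I * (p - 1) := mul_le_mul_of_nonneg_left hpge hIpos.le
    linarith
  linarith [key p hp1]

set_option maxHeartbeats 1000000 in
theorem phiStar_cont_strictAnti_limits (f : ℝ → ℝ)
    (hf : ∀ p, 1 < p → f p ∈ Set.Ioo (0:ℝ) 1 ∧ 2 * E1 p (f p) = K1 p (f p)) :
    ContinuousOn (fun p => π - 2 * Real.arcsin (f p)) (Set.Ioi (1:ℝ)) ∧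
    StrictAntiOn (fun p => π - 2 * Real.arcsin (f p)) (Set.Ioi (1:ℝ)) ∧
    Tendsto (fun p => π - 2 * Real.arcsin (f p)) (nhdsWithin 1 (Set.Ioi 1)) (nhds (π / 2)) ∧
    Tendsto (fun p => π - 2 * Real.arcsin (f p)) atTop (nhds 0) ∧
    ∀ p ∈ Set.Ioi (1:ℝ), π - 2 * Real.arcsin (f p) ∈ Set.Ioo 0 (π / 2) := by
  have hf01 : ∀ p, 1 < p → f p ∈ Set.Ioo (0:ℝ) 1 := fun p hp => (hf p hp).1
  have hroot : ∀ p, 1 < p → GG p (f p) = 0 := by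
    intro p hp
    have h2 := (hf p hp).2
    have hmem := hf01 p hp
    have heq := GG_eq hp ⟨hmem.1.le, hmem.2⟩
    linarith
  have hsqrt2 : ((Real.sqrt 2)/2) ^ 2 = 1/2 := by
    rw [div_pow, Real.sq_sqrt (by norm_num : (0:ℝ) ≤ 2)]; norm_num
  have hs2pos : 0 < Real.sqrt 2 / 2 := by positivity
  have hs2lt : Real.sqrt 2 / 2 < 1 := by
    nlinarith [Real.sq_sqrt (show (0:ℝ) ≤ 2 by norm_num), Real.sqrt_nonneg 2]
  have hgt : ∀ p, 1 < p → Real.sqrt 2 / 2 < f p := by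
    intro p hp
    by_contra hle
    push_neg at hle
    have hpos : 0 < GG p (Real.sqrt 2 / 2) :=
      GG_pos_of_small hp hs2pos.le hs2lt (by rw [hsqrt2]; norm_num)
    rcases eq_or_lt_of_le hle with heq | hlt
    · have := hroot p hp; rw [heq] at this; linarith
    · have := GG_anti hp (hf01 p hp).1.le hlt hs2lt
      linarith [hroot p hp]
  have hmono : ∀ p1 p2, 1 < p1 → p1 < p2 → f p1 < f p2 := by
    intro p1 p2 hp1 hp12
    have hp2 : 1 < p2 := lt_trans hp1 hp12
    have hGpos := GG_pos_of_root hp1 hp12 (hf01 p1 hp1).1 (hf01 p1 hp1).2 (hroot p1 hp1)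
    by_contra hle
    push_neg at hle
    rcases eq_or_lt_of_le hle with heq | hlt
    · have := hroot p2 hp2; rw [heq] at this; linarith
    · have := GG_anti hp2 (hf01 p2 hp2).1.le hlt (hf01 p1 hp1).2
      linarith [hroot p2 hp2]
  have hbrak_lt : ∀ p q, 1 < p → 0 < q → q < 1 → GG p q < 0 → f p < q := by
    intro p q hp hq0 hq1 hneg
    by_contra hle
    push_neg at hle
    rcases eq_or_lt_of_le hle with heq | hlt
    · have := hroot p hp; rw [← heq] at this; linarith
    · have := GG_anti hp hq0.le hlt (hf01 p hp).2
      linarith [hroot p hp]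
  have hbrak_gt : ∀ p q, 1 < p → 0 ≤ q → q < 1 → 0 < GG p q → q < f p := by
    intro p q hp hq0 hq1 hpos
    by_contra hle
    push_neg at hle
    rcases eq_or_lt_of_le hle with heq | hlt
    · have := hroot p hp; rw [heq] at this; linarith
    · have := GG_anti hp (hf01 p hp).1.le hlt hq1
      linarith [hroot p hp]
  -- continuity of f
  have hcf : ∀ p₀ ∈ Set.Ioi (1:ℝ), Tendsto f (nhdsWithin p₀ (Set.Ioi 1)) (nhds (f p₀)) := by
    intro p₀ hp₀
    rw [Set.mem_Ioi] at hp₀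
    rw [Metric.tendsto_nhds]
    intro ε hε
    have h0 := hf01 p₀ hp₀
    set qlow : ℝ := f p₀ - min (ε/2) (f p₀ / 2) with hqm
    set qhigh : ℝ := f p₀ + min (ε/2) ((1 - f p₀)/2) with hqp
    have hqm0 : 0 < qlow := by
      rw [hqm]; have := min_le_right (ε/2) (f p₀/2); linarith [h0.1]
    have hqmlt : qlow < f p₀ := by
      rw [hqm]; have := lt_min (half_pos hε) (half_pos h0.1); linarith
    have hqp1 : qhigh < 1 := by
      rw [hqp]; have := min_le_right (ε/2) ((1 - f p₀)/2); linarith [h0.2]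
    have hqpgt : f p₀ < qhigh := by
      rw [hqp]; have := lt_min (half_pos hε) (half_pos (by linarith [h0.2] : (0:ℝ) < 1 - f p₀))
      linarith
    have hqme : f p₀ - qlow ≤ ε / 2 := by
      rw [hqm]; have := min_le_left (ε/2) (f p₀ / 2); linarith
    have hqpe : qhigh - f p₀ ≤ ε / 2 := by
      rw [hqp]; have := min_le_left (ε/2) ((1 - f p₀)/2); linarith
    clear_value qlow qhigh
    have hGm : 0 < GG p₀ qlow := by
      have := GG_anti hp₀ hqm0.le hqmlt h0.2; linarith [hroot p₀ hp₀]
    have hGp : GG p₀ qhigh < 0 := by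
      have := GG_anti hp₀ h0.1.le hqpgt hqp1; linarith [hroot p₀ hp₀]
    have hTlow := GG_tendsto hqm0 (lt_trans hqmlt h0.2) hp₀
    have hThigh := GG_tendsto (lt_trans h0.1 hqpgt) hqp1 hp₀
    have hevlow := hTlow.eventually (eventually_gt_nhds hGm)
    have hevhigh := hThigh.eventually (eventually_lt_nhds hGp)
    filter_upwards [hevlow, hevhigh, self_mem_nhdsWithin] with p hlow hhigh hpIoi
    have hp : 1 < p := hpIoi
    have l1 : qlow < f p := hbrak_gt p qlow hp hqm0.le (lt_trans hqmlt h0.2) hlow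
    have l2 : f p < qhigh := hbrak_lt p qhigh hp (lt_trans h0.1 hqpgt) hqp1 hhigh
    rw [Real.dist_eq, abs_sub_lt_iff]
    constructor
    · linarith
    · linarith
  have harc : Continuous (fun x : ℝ => π - 2 * Real.arcsin x) :=
    continuous_const.sub (continuous_const.mul Real.continuous_arcsin)
  have harcsin2 : Real.arcsin (Real.sqrt 2 / 2) = π/4 := by
    rw [← Real.sin_pi_div_four]
    exact Real.arcsin_sin (by linarith [Real.pi_pos]) (by linarith [Real.pi_pos])
  refine ⟨?_, ?_, ?_, ?_, ?_⟩
  · -- continuity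
    intro p₀ hp₀
    exact ((harc.tendsto (f p₀)).comp (hcf p₀ hp₀) : Tendsto _ _ _)
  · -- strict anti
    intro p1 h1 p2 h2 h12
    rw [Set.mem_Ioi] at h1 h2
    have hflt := hmono p1 p2 h1 h12
    have hm1 : f p1 ∈ Set.Icc (-1:ℝ) 1 :=
      ⟨by linarith [(hf01 p1 h1).1], (hf01 p1 h1).2.le⟩
    have hm2 : f p2 ∈ Set.Icc (-1:ℝ) 1 :=
      ⟨by linarith [(hf01 p2 h2).1], (hf01 p2 h2).2.le⟩
    have ha : Real.arcsin (f p1) < Real.arcsin (f p2) :=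
      Real.strictMonoOn_arcsin hm1 hm2 hflt
    simp only
    linarith
  · -- limit at 1⁺
    have hftend : Tendsto f (nhdsWithin 1 (Set.Ioi 1)) (nhds (Real.sqrt 2 / 2)) := by
      rw [Metric.tendsto_nhds]
      intro ε hε
      set q1 : ℝ := Real.sqrt 2 / 2 + min (ε/2) ((1 - Real.sqrt 2 / 2)/2) with hq1
      have hq1gt : Real.sqrt 2 / 2 < q1 := by
        rw [hq1]
        have := lt_min (half_pos hε) (half_pos (by linarith : (0:ℝ) < 1 - Real.sqrt 2 / 2))
        linarith
      have hq1lt : q1 < 1 := by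
        rw [hq1]; have := min_le_right (ε/2) ((1 - Real.sqrt 2 / 2)/2); linarith
      have hq10 : 0 < q1 := lt_trans hs2pos hq1gt
      have hq1e : q1 - Real.sqrt 2 / 2 ≤ ε / 2 := by
        rw [hq1]; have := min_le_left (ε/2) ((1 - Real.sqrt 2 / 2)/2); linarith
      clear_value q1
      have h2q1 : 1 < 2 * q1 ^ 2 := by
        have h := mul_self_lt_mul_self hs2pos.le hq1gt
        have e1 : q1 ^ 2 = q1 * q1 := by ring
        have e2 : (Real.sqrt 2 / 2) * (Real.sqrt 2 / 2) = 1/2 := by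
          rw [← pow_two]; exact hsqrt2
        linarith
      have hev := GG_eventually_neg hq10 hq1lt h2q1
      filter_upwards [hev, self_mem_nhdsWithin] with p hGneg hpIoi
      have hp : 1 < p := hpIoi
      have l2 : f p < q1 := hbrak_lt p q1 hp hq10 hq1lt hGneg
      have l1 : Real.sqrt 2 / 2 < f p := hgt p hp
      rw [Real.dist_eq, abs_sub_lt_iff]
      constructor
      · linarith
      · linarith
    have hcomp := (harc.tendsto (Real.sqrt 2 / 2)).comp hftend
    have : π - 2 * Real.arcsin (Real.sqrt 2 / 2) = π/2 := by rw [harcsin2]; ring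
    rw [this] at hcomp
    exact hcomp
  · -- limit at ∞
    have hftend : Tendsto f atTop (nhds 1) := by
      rw [Metric.tendsto_nhds]
      intro ε hε
      set q1 : ℝ := max (1 - ε/2) (1/2) with hq1
      have hq10 : 0 < q1 := lt_of_lt_of_le (by norm_num) (le_max_right _ _)
      have hq1lt : q1 < 1 := by
        rw [hq1]
        apply max_lt (by linarith) (by norm_num)
      have m1 : (1:ℝ) - ε/2 ≤ q1 := le_max_left _ _
      clear_value q1
      have hev := GG_eventually_pos hq10 hq1lt
      filter_upwards [hev, eventually_gt_atTop 1] with p hGpos hp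
      have l1 : q1 < f p := hbrak_gt p q1 hp hq10.le hq1lt hGpos
      have l2 : f p < 1 := (hf01 p hp).2
      rw [Real.dist_eq, abs_sub_lt_iff]
      constructor <;> linarith
    have hcomp := (harc.tendsto 1).comp hftend
    have : π - 2 * Real.arcsin 1 = 0 := by rw [Real.arcsin_one]; ring
    rw [this] at hcomp
    exact hcomp
  · -- Ioo membership
    intro p hp
    rw [Set.mem_Ioi] at hp
    have h1 := hgt p hp
    have h2 := (hf01 p hp).2
    have hm1 : Real.sqrt 2 / 2 ∈ Set.Icc (-1:ℝ) 1 := ⟨by linarith, hs2lt.le⟩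
    have hm2 : f p ∈ Set.Icc (-1:ℝ) 1 := ⟨by linarith [(hf01 p hp).1], h2.le⟩
    constructor
    · have := Real.arcsin_lt_pi_div_two.2 h2
      linarith
    · have ha : Real.arcsin (Real.sqrt 2 / 2) < Real.arcsin (f p) :=
        Real.strictMonoOn_arcsin hm1 hm2 h1
      rw [harcsin2] at ha
      linarith
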